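/- arXiv:1211.6542 — 2 statements merged into one kernel-verified Lean document; each statement's English description precedes it below -/
import Mathlib

section
/- Let $1 < p < N$, $\tilde q = p-1+p/N$, $\tilde q < q < p$, and let $B = B(0,1) \subset \mathbb{R}^N$ be the open unit ball. Set $\gamma = \frac{p-q}{q+1-p} > 0$. Then there exists $C > 0$ such that the function $u_C(x) = C(|x|^{-\gamma} - 1)$ satisfies $-\Delta_p u_C = |\nabla u_C|^q$ in $B \setminus \{0\}$, $u_C = 0$ on $\partial B$, and $u_C \in W^{1,p}(B)$. -/
open MeasureTheory Metric Set Filter Module InnerProductSpace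
open scoped ENNReal RealInnerProductSpace

noncomputable section

lemma aux_finite (N : ℕ) {s : ℝ} (hs : 0 < s) (hsN : s < N) :
    ∫⁻ x : EuclideanSpace ℝ (Fin N) in ball 0 1, ENNReal.ofReal (‖x‖ ^ (-s)) < ∞ := by
  set E := EuclideanSpace ℝ (Fin N)
  set μ := volume.restrict (ball (0 : E) 1) with hμ
  have hmeas : Measurable fun x : E => ‖x‖ ^ (-s) := by fun_prop
  rw [lintegral_eq_lintegral_meas_le μ
      (Eventually.of_forall fun x => Real.rpow_nonneg (norm_nonneg x) _) hmeas.aemeasurable]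
  have hsub : ∀ t : ℝ, 0 < t → {a : E | t ≤ ‖a‖ ^ (-s)} ⊆ closedBall 0 (t ^ (-s)⁻¹) := by
    intro t ht a ha
    simp only [mem_setOf_eq] at ha
    have ha0 : a ≠ 0 := by
      rintro rfl
      rw [norm_zero, Real.zero_rpow (neg_ne_zero.mpr hs.ne')] at ha
      linarith
    have hna : 0 < ‖a‖ := norm_pos_iff.mpr ha0
    rw [mem_closedBall_zero_iff]
    exact (Real.le_rpow_inv_iff_of_neg hna ht (by linarith)).mpr ha
  have hfinrank : finrank ℝ E = N := finrank_euclideanSpace_fin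
  have vB_lt : volume (ball (0 : E) 1) < ∞ := measure_ball_lt_top
  calc
    ∫⁻ t in Ioi (0:ℝ), μ {a : E | t ≤ ‖a‖ ^ (-s)}
      ≤ ∫⁻ t in Ioc (0:ℝ) 1 ∪ Ioi 1, μ {a : E | t ≤ ‖a‖ ^ (-s)} :=
        lintegral_mono_set Ioi_subset_Ioc_union_Ioi
    _ ≤ (∫⁻ t in Ioc (0:ℝ) 1, μ {a : E | t ≤ ‖a‖ ^ (-s)})
        + ∫⁻ t in Ioi (1:ℝ), μ {a : E | t ≤ ‖a‖ ^ (-s)} := lintegral_union_le _ _ _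
    _ < ∞ := by
        refine ENNReal.add_lt_top.2 ⟨?_, ?_⟩
        · calc
            ∫⁻ t in Ioc (0:ℝ) 1, μ {a : E | t ≤ ‖a‖ ^ (-s)}
              ≤ ∫⁻ _ in Ioc (0:ℝ) 1, volume (ball (0 : E) 1) := by
                refine setLIntegral_mono' measurableSet_Ioc fun t ht => ?_
                exact le_trans (measure_mono (subset_univ _))
                  (by rw [hμ, Measure.restrict_apply_univ])
            _ < ∞ := by
                rw [setLIntegral_const]
                exact ENNReal.mul_lt_top vB_lt (by simp [measure_Ioc_lt_top])
        · calc
            ∫⁻ t in Ioi (1:ℝ), μ {a : E | t ≤ ‖a‖ ^ (-s)}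
              ≤ ∫⁻ t in Ioi (1:ℝ),
                  ENNReal.ofReal (t ^ (-(N / s))) * volume (ball (0 : E) 1) := by
                refine setLIntegral_mono' measurableSet_Ioi fun t ht => ?_
                have ht0 : (0:ℝ) < t := lt_trans one_pos ht
                have h1 : μ {a : E | t ≤ ‖a‖ ^ (-s)}
                    ≤ volume (closedBall (0 : E) (t ^ (-s)⁻¹)) :=
                  le_trans (Measure.restrict_apply_le _ _) (measure_mono (hsub t ht0))
                refine le_trans h1 ?_
                rw [Measure.addHaar_closedBall _ _ (by positivity), hfinrank]
                gcongr
                rw [← Real.rpow_natCast (t ^ (-s)⁻¹) N, ← Real.rpow_mul ht0.le]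
                apply le_of_eq
                congr 1
                rw [inv_neg, neg_mul, neg_inj, inv_mul_eq_div]
            _ = (∫⁻ t in Ioi (1:ℝ), ENNReal.ofReal (t ^ (-(N / s))))
                * volume (ball (0 : E) 1) := lintegral_mul_const' _ _ vB_lt.ne
            _ < ∞ := by
                refine ENNReal.mul_lt_top ?_ vB_lt
                refine IntegrableOn.setLIntegral_lt_top ?_
                refine integrableOn_Ioi_rpow_of_lt ?_ one_pos
                rw [neg_lt_neg_iff, lt_div_iff₀ hs, one_mul]
                exact hsN

lemma aux_memLp (N : ℕ) {p : ℝ} (hp : 0 < p) {F : Type*} [NormedAddCommGroup F]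
    {f : EuclideanSpace ℝ (Fin N) → F}
    (hf : AEStronglyMeasurable f (volume.restrict (ball (0 : EuclideanSpace ℝ (Fin N)) 1)))
    {c s : ℝ} (hc : 0 ≤ c) (hs : 0 < s) (hspN : s * p < N)
    (hb : ∀ᵐ x ∂(volume.restrict (ball (0 : EuclideanSpace ℝ (Fin N)) 1)),
      ‖f x‖ ≤ c * ‖x‖ ^ (-s)) :
    MemLp f (ENNReal.ofReal p) (volume.restrict (ball (0 : EuclideanSpace ℝ (Fin N)) 1)) := by
  set μ := volume.restrict (ball (0 : EuclideanSpace ℝ (Fin N)) 1) with hμ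
  refine ⟨hf, ?_⟩
  rw [eLpNorm_eq_lintegral_rpow_enorm_toReal (by simp [hp]) ENNReal.ofReal_ne_top,
    ENNReal.toReal_ofReal hp.le]
  have key : ∫⁻ x, (‖f x‖₊ : ℝ≥0∞) ^ p ∂μ < ∞ := by
    have hbd : ∀ᵐ x ∂μ, (‖f x‖₊ : ℝ≥0∞) ^ p
        ≤ ENNReal.ofReal (c ^ p) * ENNReal.ofReal (‖x‖ ^ (-(s * p))) := by
      filter_upwards [hb] with x hx
      rw [← enorm_eq_nnnorm, ← ofReal_norm, ENNReal.ofReal_rpow_of_nonneg (norm_nonneg _) hp.le,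
        ← ENNReal.ofReal_mul (by positivity)]
      refine ENNReal.ofReal_le_ofReal ?_
      calc ‖f x‖ ^ p ≤ (c * ‖x‖ ^ (-s)) ^ p :=
            Real.rpow_le_rpow (norm_nonneg _) hx hp.le
        _ = c ^ p * ‖x‖ ^ (-(s*p)) := by
            rw [Real.mul_rpow hc (Real.rpow_nonneg (norm_nonneg _) _),
              ← Real.rpow_mul (norm_nonneg _), neg_mul]
    calc ∫⁻ x, (‖f x‖₊ : ℝ≥0∞) ^ p ∂μ
        ≤ ∫⁻ x, ENNReal.ofReal (c ^ p) * ENNReal.ofReal (‖x‖ ^ (-(s * p))) ∂μ :=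
          lintegral_mono_ae hbd
      _ = ENNReal.ofReal (c ^ p) * ∫⁻ x, ENNReal.ofReal (‖x‖ ^ (-(s * p))) ∂μ :=
          lintegral_const_mul' _ _ ENNReal.ofReal_ne_top
      _ < ∞ := ENNReal.mul_lt_top ENNReal.ofReal_lt_top
          (aux_finite N (by positivity) hspN)
  exact ENNReal.rpow_lt_top_of_nonneg (by positivity) key.ne

lemma hw_aux (N : ℕ) (z : EuclideanSpace ℝ (Fin N)) (r : ℝ) :
    ((‖z‖ ^ 2 : ℝ)) ^ (r / 2) = ‖z‖ ^ r := by
  rw [← Real.rpow_natCast ‖z‖ 2, ← Real.rpow_mul (norm_nonneg z),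
    show ((2 : ℕ) : ℝ) * (r / 2) = r by push_cast; ring]

lemma hasGradientAt_aux (N : ℕ) (C γ : ℝ) {y : EuclideanSpace ℝ (Fin N)} (hy : y ≠ 0) :
    HasGradientAt (fun x : EuclideanSpace ℝ (Fin N) => C * (‖x‖ ^ (-γ) - 1))
      ((-(C * γ) * (‖y‖ ^ 2 : ℝ) ^ (-(γ + 2) / 2)) • y) y := by
  have hwy : (0:ℝ) < ‖y‖ ^ 2 := by
    have := norm_pos_iff.mpr hy; positivity
  have h1 : HasFDerivAt (fun x : EuclideanSpace ℝ (Fin N) => ‖x‖ ^ 2)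
      (2 • innerSL ℝ y) y := (hasStrictFDerivAt_norm_sq y).hasFDerivAt
  have h2 : HasDerivAt (fun z : ℝ => z ^ (-γ / 2)) ((-γ / 2) * (‖y‖ ^ 2 : ℝ) ^ (-γ / 2 - 1))
      (‖y‖ ^ 2) := Real.hasDerivAt_rpow_const (Or.inl hwy.ne')
  have h4 := ((h2.comp_hasFDerivAt y h1).sub_const 1).const_mul C
  have hfun : (fun x : EuclideanSpace ℝ (Fin N) => C * (‖x‖ ^ (-γ) - 1))
      = fun x : EuclideanSpace ℝ (Fin N) => C * ((‖x‖ ^ 2 : ℝ) ^ (-γ / 2) - 1) :=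
    funext fun x => by rw [hw_aux N x (-γ)]
  rw [hasGradientAt_iff_hasFDerivAt, hfun]
  refine h4.congr_fderiv ?_
  ext v
  simp only [toDual_apply_apply, ContinuousLinearMap.coe_smul', Pi.smul_apply,
    ContinuousLinearMap.smul_apply, ContinuousLinearMap.add_apply, innerSL_apply_apply,
    real_inner_smul_left, smul_eq_mul, two_smul]
  rw [show -(γ + 2) / 2 = -γ / 2 - 1 by ring]
  ring

lemma div_aux (N : ℕ) (κ m : ℝ) {x : EuclideanSpace ℝ (Fin N)} (hx : x ≠ 0)
    {F : EuclideanSpace ℝ (Fin N) → EuclideanSpace ℝ (Fin N)}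
    (hF : ∀ y : EuclideanSpace ℝ (Fin N), y ≠ 0 → F y = (κ * (‖y‖ ^ 2 : ℝ) ^ m) • y) :
    ∑ i : Fin N, (fderiv ℝ F x (EuclideanSpace.single i (1 : ℝ))) i
      = κ * (N + 2 * m) * (‖x‖ ^ 2 : ℝ) ^ m := by
  have hwx : (0:ℝ) < ‖x‖ ^ 2 := by
    have := norm_pos_iff.mpr hx; positivity
  have hev : F =ᶠ[nhds x] fun y => (κ * (‖y‖ ^ 2 : ℝ) ^ m) • y :=
    eventually_of_mem (compl_singleton_mem_nhds hx) fun y hy => hF y hy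
  have h1 : HasFDerivAt (fun y : EuclideanSpace ℝ (Fin N) => ‖y‖ ^ 2)
      (2 • innerSL ℝ x) x := (hasStrictFDerivAt_norm_sq x).hasFDerivAt
  have h2 : HasDerivAt (fun z : ℝ => z ^ m) (m * (‖x‖ ^ 2 : ℝ) ^ (m - 1)) (‖x‖ ^ 2) :=
    Real.hasDerivAt_rpow_const (Or.inl hwx.ne')
  have h3 := (h2.comp_hasFDerivAt x h1).const_mul κ
  have h4 := h3.smul (hasFDerivAt_id x)
  have h5 := hev.fderiv_eq.trans h4.fderiv
  simp only [Function.comp_apply] at h5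
  rw [h5]
  have hsum : ∑ i : Fin N, x i * x i = (‖x‖ ^ 2 : ℝ) := by
    rw [EuclideanSpace.norm_eq, Real.sq_sqrt (by positivity)]
    exact Finset.sum_congr rfl fun i _ => by
      rw [Real.norm_eq_abs, sq_abs, sq]
  have hterm : ∀ i : Fin N,
      (((κ * (‖x‖ ^ 2 : ℝ) ^ m) • ContinuousLinearMap.id ℝ (EuclideanSpace ℝ (Fin N))
          + (κ • ((m * (‖x‖ ^ 2 : ℝ) ^ (m - 1)) • (2 • innerSL ℝ x))).smulRight
              (id x)) (EuclideanSpace.single i (1 : ℝ))) i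
        = κ * (‖x‖ ^ 2 : ℝ) ^ m + κ * (m * (‖x‖ ^ 2 : ℝ) ^ (m - 1)) * 2 * (x i * x i) := by
    intro i
    have hinner : ⟪x, EuclideanSpace.single i (1 : ℝ)⟫_ℝ = x i := by
      rw [EuclideanSpace.inner_single_right]; simp
    simp only [ContinuousLinearMap.add_apply, ContinuousLinearMap.smul_apply,
      ContinuousLinearMap.coe_id', id_eq, ContinuousLinearMap.smulRight_apply,
      innerSL_apply_apply, two_smul, PiLp.add_apply, PiLp.smul_apply, smul_eq_mul, hinner,
      EuclideanSpace.single_apply, eq_self_iff_true, if_true]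
    ring
  rw [Finset.sum_congr rfl fun i _ => hterm i, Finset.sum_add_distrib, Finset.sum_const,
    Finset.card_univ, Fintype.card_fin, ← Finset.mul_sum, hsum]
  rw [show κ * (m * (‖x‖ ^ 2 : ℝ) ^ (m - 1)) * 2 * (‖x‖ ^ 2 : ℝ)
      = 2 * κ * m * ((‖x‖ ^ 2 : ℝ) ^ (m - 1) * (‖x‖ ^ 2 : ℝ) ^ (1:ℝ)) by
        rw [Real.rpow_one]; ring,
    ← Real.rpow_add hwx, sub_add_cancel]
  push_cast
  ring

/-- Sharpness example: for `1 < p < N` and `q̃ = p-1+p/N < q < p`, with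
`γ = (p-q)/(q+1-p) > 0`, there is `C > 0` such that `u_C(x) = C(|x|^{-γ} - 1)`
satisfies `-Δ_p u_C = |∇ u_C|^q` pointwise in `B(0,1) \ {0}`, vanishes on
`∂B(0,1)`, and belongs to `W^{1,p}(B(0,1))`. -/
theorem stmt8 (N : ℕ) (p q : ℝ) (hN : 2 ≤ N) (hp : 1 < p) (hpN : p < N)
    (hq1 : p - 1 + p / N < q) (hq2 : q < p) :
    0 < (p - q) / (q + 1 - p) ∧
    ∃ C : ℝ, 0 < C ∧
      (let u : EuclideanSpace ℝ (Fin N) → ℝ :=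
        fun x => C * (‖x‖ ^ (-((p - q) / (q + 1 - p))) - 1)
       -- the p-Laplacian `div(|∇u|^{p-2}∇u)` computed pointwise
       (∀ x ∈ Metric.ball (0 : EuclideanSpace ℝ (Fin N)) 1 \ {0},
          -(∑ i : Fin N,
              (fderiv ℝ (fun y => ‖gradient u y‖ ^ (p - 2) • gradient u y) x
                (EuclideanSpace.single i (1 : ℝ))) i)
            = ‖gradient u x‖ ^ q) ∧
       (∀ x : EuclideanSpace ℝ (Fin N), ‖x‖ = 1 → u x = 0) ∧
       MemLp u (ENNReal.ofReal p)
         (volume.restrict (Metric.ball (0 : EuclideanSpace ℝ (Fin N)) 1)) ∧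
       MemLp (fun x => gradient u x) (ENNReal.ofReal p)
         (volume.restrict (Metric.ball (0 : EuclideanSpace ℝ (Fin N)) 1))) := by
  have hNR : (2:ℝ) ≤ N := by exact_mod_cast hN
  have hp0 : (0:ℝ) < p := by linarith
  have hpN0 : 0 < p / N := by positivity
  have hden : 0 < q + 1 - p := by linarith
  have hdenN : p / (N:ℝ) < q + 1 - p := by linarith
  set γ : ℝ := (p - q) / (q + 1 - p) with hγdef
  have hγ : 0 < γ := div_pos (by linarith) hden
  have hγ1 : γ + 1 = 1 / (q + 1 - p) := by rw [hγdef]; field_simp; ring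
  have hγ1N : γ + 1 < N / p := by
    rw [hγ1]
    calc 1 / (q + 1 - p) < 1 / (p / N) := one_div_lt_one_div_of_lt hpN0 hdenN
      _ = N / p := one_div_div _ _
  have hγpN : (γ + 1) * p < N := (lt_div_iff₀ hp0).mp hγ1N
  set K : ℝ := (N:ℝ) - 1 - (γ + 1) * (p - 1) with hKdef
  have hK : 0 < K := by
    have h1 : 1 < γ + 1 := by linarith
    nlinarith
  have hqid : (γ + 1) * (p - 1) + 1 = (γ + 1) * q := by
    rw [hγ1]; field_simp; ring
  set t : ℝ := K ^ (1 / (q + 1 - p)) with htdef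
  have ht : 0 < t := Real.rpow_pos_of_pos hK _
  have htK : t ^ (p - 1) * K = t ^ q := by
    have h1 : t ^ (q - (p - 1)) = K := by
      rw [htdef, ← Real.rpow_mul hK.le,
        show 1 / (q + 1 - p) * (q - (p - 1)) = 1 by field_simp; ring, Real.rpow_one]
    calc t ^ (p - 1) * K = t ^ (p - 1) * t ^ (q - (p - 1)) := by rw [h1]
      _ = t ^ q := by rw [← Real.rpow_add ht]; ring_nf
  set C : ℝ := t / γ with hCdef
  have hC : 0 < C := div_pos ht hγ
  have hCγ : C * γ = t := by rw [hCdef]; field_simp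
  set u : EuclideanSpace ℝ (Fin N) → ℝ := fun x => C * (‖x‖ ^ (-γ) - 1) with hudef
  -- gradient facts
  have hgrad : ∀ y : EuclideanSpace ℝ (Fin N), y ≠ 0 →
      gradient u y = (-(C * γ) * (‖y‖ ^ 2 : ℝ) ^ (-(γ + 2) / 2)) • y :=
    fun y hy => (hasGradientAt_aux N C γ hy).gradient
  have hgradnorm : ∀ y : EuclideanSpace ℝ (Fin N), y ≠ 0 →
      ‖gradient u y‖ = t * (‖y‖ ^ 2 : ℝ) ^ (-(γ + 1) / 2) := by
    intro y hy
    have hny : 0 < ‖y‖ := norm_pos_iff.mpr hy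
    have hwy : (0:ℝ) < ‖y‖ ^ 2 := by positivity
    rw [hgrad y hy, norm_smul, Real.norm_eq_abs, abs_mul, abs_neg,
      abs_of_pos (by positivity : (0:ℝ) < C * γ),
      abs_of_pos (Real.rpow_pos_of_pos hwy _), hCγ,
      hw_aux N y (-(γ + 2)), hw_aux N y (-(γ + 1)), mul_assoc,
      ← Real.rpow_add_one hny.ne' (-(γ + 2)), show -(γ + 2) + 1 = -(γ + 1) by ring]
  have hF : ∀ y : EuclideanSpace ℝ (Fin N), y ≠ 0 →
      (fun z => ‖gradient u z‖ ^ (p - 2) • gradient u z) y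
        = ((-(t ^ (p - 1))) * (‖y‖ ^ 2 : ℝ) ^ (-((γ + 1) * (p - 1) + 1) / 2)) • y := by
    intro y hy
    have hny : 0 < ‖y‖ := norm_pos_iff.mpr hy
    have hwy : (0:ℝ) < ‖y‖ ^ 2 := by positivity
    show ‖gradient u y‖ ^ (p - 2) • gradient u y = _
    rw [hgradnorm y hy, hgrad y hy, smul_smul, hCγ]
    congr 1
    rw [Real.mul_rpow ht.le (Real.rpow_nonneg hwy.le _), ← Real.rpow_mul hwy.le,
      show -((γ + 1) * (p - 1) + 1) / 2 = -(γ + 1) / 2 * (p - 2) + -(γ + 2) / 2 by ring,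
      Real.rpow_add hwy, show p - 1 = p - 2 + 1 by ring, Real.rpow_add ht, Real.rpow_one]
    ring
  -- the four statements
  have hA : ∀ x ∈ Metric.ball (0 : EuclideanSpace ℝ (Fin N)) 1 \ {0},
      -(∑ i : Fin N,
          (fderiv ℝ (fun y => ‖gradient u y‖ ^ (p - 2) • gradient u y) x
            (EuclideanSpace.single i (1 : ℝ))) i)
        = ‖gradient u x‖ ^ q := by
    intro x hx
    have hx0 : x ≠ 0 := fun h => hx.2 (by simp [h])
    have hnx : 0 < ‖x‖ := norm_pos_iff.mpr hx0
    have hwx : (0:ℝ) < ‖x‖ ^ 2 := by positivity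
    rw [div_aux N (-(t ^ (p - 1))) (-((γ + 1) * (p - 1) + 1) / 2) hx0 hF,
      hgradnorm x hx0, Real.mul_rpow ht.le (Real.rpow_nonneg hwx.le _),
      ← Real.rpow_mul hwx.le,
      show (N:ℝ) + 2 * (-((γ + 1) * (p - 1) + 1) / 2) = K by rw [hKdef]; ring, hqid,
      show -(γ + 1) / 2 * q = -((γ + 1) * q) / 2 by ring]
    linear_combination ((‖x‖ ^ 2 : ℝ) ^ (-((γ + 1) * q) / 2)) * htK
  have hB : ∀ x : EuclideanSpace ℝ (Fin N), ‖x‖ = 1 → u x = 0 := by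
    intro x hx
    rw [hudef]
    simp [hx, Real.one_rpow]
  -- ae facts
  have hsing : volume ({0} : Set (EuclideanSpace ℝ (Fin N))) = 0 := by
    refine measure_mono_null (by simp : ({0} : Set (EuclideanSpace ℝ (Fin N)))
      ⊆ closedBall 0 0) ?_
    rw [Measure.addHaar_closedBall _ _ le_rfl, finrank_euclideanSpace_fin]
    have : (0:ℝ) ^ N = 0 := by
      apply zero_pow; omega
    simp [this]
  have h0ae : ∀ᵐ x : EuclideanSpace ℝ (Fin N) ∂volume, x ≠ 0 := by
    rw [ae_iff]
    simpa [Set.setOf_eq_eq_singleton] using hsing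
  have hD : MemLp u (ENNReal.ofReal p)
      (volume.restrict (Metric.ball (0 : EuclideanSpace ℝ (Fin N)) 1)) := by
    refine aux_memLp N hp0 ?_ hC.le hγ (by nlinarith) ?_
    · exact Measurable.aestronglyMeasurable (by fun_prop)
    · filter_upwards [ae_restrict_of_ae h0ae, ae_restrict_mem measurableSet_ball]
        with x hx0 hxb
      have hnx : 0 < ‖x‖ := norm_pos_iff.mpr hx0
      have hxlt : ‖x‖ < 1 := by rwa [mem_ball_zero_iff] at hxb
      have h1 : 1 ≤ ‖x‖ ^ (-γ) :=
        Real.one_le_rpow_of_pos_of_le_one_of_nonpos hnx hxlt.le (by linarith)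
      rw [hudef]
      simp only [Real.norm_eq_abs, abs_mul, abs_of_pos hC,
        abs_of_nonneg (by linarith : (0:ℝ) ≤ ‖x‖ ^ (-γ) - 1)]
      have : ‖x‖ ^ (-γ) - 1 ≤ ‖x‖ ^ (-γ) := by linarith
      exact mul_le_mul_of_nonneg_left this hC.le
  have hE : MemLp (fun x => gradient u x) (ENNReal.ofReal p)
      (volume.restrict (Metric.ball (0 : EuclideanSpace ℝ (Fin N)) 1)) := by
    have haeeq : (fun x => gradient u x)
        =ᵐ[volume.restrict (Metric.ball (0 : EuclideanSpace ℝ (Fin N)) 1)]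
        fun y => (-(C * γ) * (‖y‖ ^ 2 : ℝ) ^ (-(γ + 2) / 2)) • y :=
      (ae_restrict_of_ae h0ae).mono fun x hx => hgrad x hx
    rw [memLp_congr_ae haeeq]
    refine aux_memLp N hp0 ?_ ht.le (by linarith : (0:ℝ) < γ + 1) hγpN ?_
    · exact Measurable.aestronglyMeasurable (by fun_prop)
    · filter_upwards [ae_restrict_of_ae h0ae] with x hx0
      have heq : ‖(-(C * γ) * (‖x‖ ^ 2 : ℝ) ^ (-(γ + 2) / 2)) • x‖ = ‖gradient u x‖ := by
        rw [hgrad x hx0]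
      rw [heq, hgradnorm x hx0, show -(γ + 1) / 2 = -(γ + 1) / 2 from rfl]
      rw [show (‖x‖ ^ 2 : ℝ) ^ (-(γ + 1) / 2) = ‖x‖ ^ (-(γ + 1)) from hw_aux N x (-(γ+1))]
  exact ⟨hγ, C, hC, hA, hB, hD, hE⟩


end
end

section
/- Let $1 < p < N$, $q < \tilde q := p-1+p/N$, $q > 0$, and set $m_0 = p/q$, $\overline{m} = Np/(Np-N+p)$. Then $m_0 > \overline{m}$. Moreover, define $m^* = Nm/(N-m)$ for $1 < m < N$, and recursively $m_{n+1} = (p-1)m_n^*/q$ whenever $m_n < N$. Then the sequence $(m_n)$ is strictly increasing as long as it is defined, and there exists $n_0$ such that $m_{n_0} \geq N$. -/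
/-- Bootstrap exponent iteration: for `1 < p < N`, `0 < q < q̃ = p-1+p/N`, with
`m₀ = p/q` and `m̄ = Np/(Np-N+p)`, one has `m₀ > m̄`; the recursion
`m_{n+1} = (p-1) m_n^* / q` with `m^* = Nm/(N-m)` (defined while `m_n < N`) is
strictly increasing as long as it stays below `N`, and reaches `≥ N` in finitely
many steps. -/
theorem stmt9 (N p q : ℝ) (hN : 2 ≤ N) (hp : 1 < p) (hpN : p < N)
    (hq : 0 < q) (hqt : q < p - 1 + p / N)
    (m : ℕ → ℝ) (hm0 : m 0 = p / q)
    (hrec : ∀ n, m n < N → m (n + 1) = (p - 1) * (N * m n / (N - m n)) / q) :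
    N * p / (N * p - N + p) < p / q ∧
    (∀ n, (∀ k ≤ n, m k < N) → m n < m (n + 1)) ∧
    (∃ n₀, N ≤ m n₀) := by
  have hN0 : (0:ℝ) < N := by linarith
  have hp0 : (0:ℝ) < p := by linarith
  have hpn : p / N * N = p := div_mul_cancel₀ p (ne_of_gt hN0)
  have hqN : q * N < (p - 1) * N + p := by nlinarith [mul_lt_mul_of_pos_right hqt hN0]
  have ha0 : 0 < p / q := div_pos hp0 hq
  -- key step lemma
  have key : ∀ a : ℝ, p / q ≤ a → a < N → a < (p - 1) * (N * a / (N - a)) / q := by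
    intro a ha haN
    have ha0' : 0 < a := lt_of_lt_of_le ha0 ha
    have hd : 0 < N - a := by linarith
    have hqa : p ≤ a * q := (div_le_iff₀ hq).mp ha
    rw [lt_div_iff₀ hq, ← mul_div_assoc, mul_comm N a, ← mul_assoc, lt_div_iff₀ hd]
    nlinarith [mul_lt_mul_of_pos_right hqN ha0', mul_le_mul_of_nonneg_right hqa ha0'.le]
  -- monotonicity with lower bound
  have hmain : ∀ n, (∀ k ≤ n, m k < N) → p / q ≤ m n ∧ m n < m (n + 1) := by
    intro n
    induction n with
    | zero =>
      intro h
      refine ⟨le_of_eq hm0.symm, ?_⟩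
      rw [hrec 0 (h 0 le_rfl)]
      exact key (m 0) (le_of_eq hm0.symm) (h 0 le_rfl)
    | succ n ih =>
      intro h
      have h' : ∀ k ≤ n, m k < N := fun k hk => h k (hk.trans (Nat.le_succ n))
      obtain ⟨h1, h2⟩ := ih h'
      have hle : p / q ≤ m (n + 1) := le_of_lt (lt_of_le_of_lt h1 h2)
      refine ⟨hle, ?_⟩
      rw [hrec (n + 1) (h (n + 1) le_rfl)]
      exact key _ hle (h (n + 1) le_rfl)
  refine ⟨?_, fun n h => (hmain n h).2, ?_⟩
  · -- first part
    have hD : 0 < N * p - N + p := by nlinarith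
    rw [div_lt_div_iff₀ hD hq]
    nlinarith [mul_lt_mul_of_pos_left hqN hp0]
  · -- third part
    by_contra hcon
    push_neg at hcon
    have hall : ∀ n, m n < N := hcon
    have hlow : ∀ n, p / q ≤ m n := fun n => (hmain n (fun k _ => hall k)).1
    set a0 : ℝ := p / q with ha0def
    have hd0 : 0 < N - a0 := by linarith [hall 0, hm0 ▸ hall 0]
    set c : ℝ := (p - 1) * N / ((N - a0) * q) with hc
    have hqa0 : a0 * q = p := div_mul_cancel₀ p (ne_of_gt hq)
    have hc1 : 1 < c := by
      rw [hc, lt_div_iff₀ (by positivity)]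
      nlinarith
    have hc0 : 0 < c := lt_trans one_pos hc1
    have hgrow : ∀ n, c ^ n * a0 ≤ m n := by
      intro n
      induction n with
      | zero => simpa using le_of_eq hm0.symm
      | succ n ih =>
        have hmn : a0 ≤ m n := hlow n
        have hmnN : m n < N := hall n
        have hmn0 : 0 < m n := lt_of_lt_of_le ha0 hmn
        have hstep : c * m n ≤ m (n + 1) := by
          rw [hrec n hmnN]
          have h1 : c * m n = (p - 1) * N * m n / ((N - a0) * q) := by
            rw [hc]; ring
          have h2 : (p - 1) * (N * m n / (N - m n)) / q
              = (p - 1) * N * m n / ((N - m n) * q) := by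
            field_simp
          rw [h1, h2]
          apply div_le_div_of_nonneg_left (mul_pos (mul_pos (by linarith : (0:ℝ) < p - 1) hN0) hmn0).le (mul_pos (by linarith) hq)
          have : N - m n ≤ N - a0 := by linarith
          exact mul_le_mul_of_nonneg_right this hq.le
        calc c ^ (n + 1) * a0 = c * (c ^ n * a0) := by ring
          _ ≤ c * m n := by nlinarith
          _ ≤ m (n + 1) := hstep
    obtain ⟨n, hn⟩ := pow_unbounded_of_one_lt (N / a0) hc1
    have : N < c ^ n * a0 := by
      rw [← div_lt_iff₀ ha0] at *
      exact hn
    linarith [hgrow n, hall n]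
end
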